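/- Fix integers s, u ≥ 1. Let F₂ be the free group on two generators a, b, and let F₂⁺ be the submonoid of F₂ generated by a and b. Let A = ⟨a^s⟩ and B' = ⟨a^u⟩ be the cyclic subgroups generated by a^s and a^u, and let φ : A → B' be the isomorphism with φ(a^{ms}) = a^{mu} for m ∈ ℤ. Let F₂* be the HNN extension of F₂ with respect to A, B', φ (so F₂* = ⟨a, b, t ∣ a^s t = t a^u⟩), and let F₂⁺* be the submonoid of F₂* generated by of(F₂⁺) and t. Then (F₂*, F₂⁺*) is quasi-lattice ordered: F₂⁺* ∩ (F₂⁺*)⁻¹ = {e}, and every pair of elements of F₂* with a common upper bound in F₂⁺* (for the order u ≤ v iff u⁻¹v ∈ F₂⁺*) has a least common upper bound in F₂⁺*. -/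

import Mathlib

/-- The left-invariant relation `x ≤ y ↔ x⁻¹ * y ∈ P` associated to a submonoid `P`. -/
def QLO.le {G : Type*} [Group G] (P : Submonoid G) (x y : G) : Prop := x⁻¹ * y ∈ P

/-- `w` is the least common upper bound of `x` and `y` lying in `P`. -/
def QLO.IsLub {G : Type*} [Group G] (P : Submonoid G) (x y w : G) : Prop :=
  w ∈ P ∧ QLO.le P x w ∧ QLO.le P y w ∧
    ∀ z ∈ P, QLO.le P x z → QLO.le P y z → QLO.le P w z

/-- `(G, P)` is a quasi-lattice ordered group. -/
def QLO.IsQLO {G : Type*} [Group G] (P : Submonoid G) : Prop :=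
  (∀ x : G, x ∈ P → x⁻¹ ∈ P → x = 1) ∧
    ∀ x y : G, (∃ z ∈ P, QLO.le P x z ∧ QLO.le P y z) → ∃ w : G, QLO.IsLub P x y w

/-- The free group on two generators `a = of true` and `b = of false`. -/
abbrev F₂ : Type := FreeGroup Bool

/-- The submonoid of `F₂` generated by the two generators. -/
def F₂pos : Submonoid F₂ := Submonoid.closure {FreeGroup.of true, FreeGroup.of false}

namespace S15

open FreeGroup List

/-- positive word -/
def pos (l : List Bool) : F₂ := FreeGroup.mk (l.map (·, true))

theorem pos_nil : pos [] = 1 := by simp [pos, ← FreeGroup.one_eq_mk]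

theorem pos_append (l₁ l₂ : List Bool) : pos (l₁ ++ l₂) = pos l₁ * pos l₂ := by
  simp [pos, FreeGroup.mul_mk]

theorem pos_singleton (x : Bool) : pos [x] = FreeGroup.of x := rfl

theorem pos_cons (x : Bool) (l : List Bool) : pos (x :: l) = FreeGroup.of x * pos l := by
  rw [show x :: l = [x] ++ l from rfl, pos_append, pos_singleton]

theorem reduce_eq_self_of_chain {α : Type*} [DecidableEq α] (L : List (α × Bool))
    (h : L.Chain' fun a b => ¬(a.1 = b.1 ∧ a.2 = !b.2)) : FreeGroup.reduce L = L := by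
  induction L with
  | nil => rfl
  | cons x L ih =>
    have hL : FreeGroup.reduce L = L := ih (List.isChain_cons.1 h).2
    rw [FreeGroup.reduce.cons, hL]
    cases L with
    | nil => rfl
    | cons hd tl =>
      have := (List.isChain_cons.1 h).1 hd rfl
      show (if x.1 = hd.1 ∧ x.2 = !hd.2 then tl else x :: hd :: tl) = x :: hd :: tl
      rw [if_neg this]

theorem toWord_pos (l : List Bool) : (pos l).toWord = l.map (·, true) := by
  rw [pos, FreeGroup.toWord_mk]
  apply reduce_eq_self_of_chain
  induction l with
  | nil => exact List.isChain_nil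
  | cons x l ih =>
    rw [List.map_cons]
    refine List.isChain_cons.2 ⟨?_, ih⟩
    intro y hy
    have : y.2 = true := by
      cases l with
      | nil => simp at hy
      | cons z l => simp at hy; rw [← hy]
    simp [this]

theorem pos_injective : Function.Injective pos := by
  intro l₁ l₂ h
  have := congrArg FreeGroup.toWord h
  rw [toWord_pos, toWord_pos] at this
  exact List.map_injective_iff.2 (fun a b hab => by simpa using congrArg Prod.fst hab) this

theorem pos_mem_F₂pos (l : List Bool) : pos l ∈ F₂pos := by
  induction l with
  | nil => rw [pos_nil]; exact one_mem _
  | cons x l ih =>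
    rw [pos_cons]
    exact mul_mem (Submonoid.subset_closure (by cases x <;> simp)) ih

theorem mem_F₂pos_iff {x : F₂} : x ∈ F₂pos ↔ ∃ l, pos l = x := by
  constructor
  · intro hx
    induction hx using Submonoid.closure_induction with
    | mem y hy =>
      rcases hy with h | h
      · exact ⟨[true], by rw [pos_singleton, h]⟩
      · exact ⟨[false], by rw [pos_singleton, h]⟩
    | one => exact ⟨[], pos_nil⟩
    | mul y z _ _ hy hz =>
      obtain ⟨l₁, rfl⟩ := hy; obtain ⟨l₂, rfl⟩ := hz
      exact ⟨l₁ ++ l₂, pos_append _ _⟩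
  · rintro ⟨l, rfl⟩; exact pos_mem_F₂pos l

end S15

namespace S15
open FreeGroup List

theorem chain_const (c : Bool) (l : List Bool) :
    (l.map (·, c)).Chain' fun a b => ¬(a.1 = b.1 ∧ a.2 = !b.2) := by
  induction l with
  | nil => exact List.isChain_nil
  | cons x l ih =>
    rw [List.map_cons]
    refine List.isChain_cons.2 ⟨?_, ih⟩
    intro y hy
    have : y.2 = c := by
      cases l with
      | nil => simp at hy
      | cons z l => simp at hy; rw [← hy]
    simp [this]

/-- coprimality: no common last letter -/
def Cop (X Y : List Bool) : Prop := ¬∃ ℓ, X.getLast? = some ℓ ∧ Y.getLast? = some ℓ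

theorem toWord_frac {X Y : List Bool} (h : Cop X Y) :
    (pos X * (pos Y)⁻¹).toWord = X.map (·, true) ++ Y.reverse.map (·, false) := by
  have hinv : FreeGroup.invRev (Y.map (·, true)) = Y.reverse.map (·, false) := by
    simp [FreeGroup.invRev]
  rw [pos, pos, FreeGroup.inv_mk, FreeGroup.mul_mk, hinv, FreeGroup.toWord_mk]
  apply reduce_eq_self_of_chain
  rw [List.Chain', List.isChain_append]
  refine ⟨chain_const _ _, chain_const _ _, ?_⟩
  intro x hx y hy
  rw [List.getLast?_map] at hx
  rw [List.head?_map, List.head?_reverse] at hy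
  obtain ⟨a, ha, rfl⟩ := Option.map_eq_some_iff.1 hx
  obtain ⟨b, hb, rfl⟩ := Option.map_eq_some_iff.1 hy
  rintro ⟨h1, -⟩
  refine h ⟨b, ?_, hb⟩
  rw [show b = a from h1.symm]
  exact ha

theorem split_tf {X Z X' Z' : List Bool}
    (h : X.map (·, true) ++ Z.map (·, false) = X'.map (·, true) ++ Z'.map (·, false)) :
    X = X' ∧ Z = Z' := by
  induction X generalizing X' with
  | nil =>
    cases X' with
    | nil =>
      simp only [List.map_nil, List.nil_append] at h
      exact ⟨rfl, List.map_injective_iff.2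
        (fun a b hab => by simpa using congrArg Prod.fst hab) h⟩
    | cons x' xs' =>
      exfalso
      cases Z with
      | nil => simp at h
      | cons z zs => simp at h
  | cons x xs ih =>
    cases X' with
    | nil =>
      exfalso
      cases Z' with
      | nil => simp at h
      | cons z zs => simp at h
    | cons x' xs' =>
      simp only [List.map_cons, List.cons_append, List.cons.injEq, Prod.mk.injEq] at h
      obtain ⟨⟨h1, -⟩, h2⟩ := h
      obtain ⟨h3, h4⟩ := ih (X' := xs') h2
      exact ⟨by rw [h1, h3], h4⟩

theorem frac_unique {X Y X' Y' : List Bool} (h : Cop X Y) (h' : Cop X' Y')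
    (heq : pos X * (pos Y)⁻¹ = pos X' * (pos Y')⁻¹) : X = X' ∧ Y = Y' := by
  have := congrArg FreeGroup.toWord heq
  rw [toWord_frac h, toWord_frac h'] at this
  obtain ⟨h1, h2⟩ := split_tf this
  exact ⟨h1, List.reverse_injective h2⟩

theorem apow (n : ℕ) : (FreeGroup.of true : F₂) ^ n = pos (List.replicate n true) := by
  induction n with
  | zero => simp [pos_nil]
  | succ n ih => rw [pow_succ', ih, List.replicate_succ, pos_cons]

theorem pos_eq_one_iff {l : List Bool} : pos l = 1 ↔ l = [] := by
  constructor
  · intro h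
    have := congrArg FreeGroup.toWord h
    rw [toWord_pos, FreeGroup.toWord_one] at this
    simpa using this
  · rintro rfl; exact pos_nil

theorem nosuf {u : ℕ} (hu : 1 ≤ u) {w w' : List Bool}
    (hw : ¬ List.replicate u true <:+ w) (hw' : ¬ List.replicate u true <:+ w')
    {j : ℤ} (h : pos w' = pos w * ((FreeGroup.of true : F₂) ^ u) ^ j) : w = w' := by
  have key : ∀ (v v' : List Bool) (n : ℕ), ¬ List.replicate u true <:+ v' →
      pos v' = pos v * ((FreeGroup.of true : F₂) ^ u) ^ (n : ℤ) → v' = v ++ List.replicate (u * n) true := by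
    intro v v' n _ hp
    rw [zpow_natCast, ← pow_mul, apow, ← pos_append] at hp
    exact pos_injective hp
  rcases le_or_gt 0 j with hj | hj
  · obtain ⟨n, rfl⟩ := Int.eq_ofNat_of_zero_le hj
    have h2 := key w w' n hw' h
    rcases Nat.eq_zero_or_pos n with rfl | hn
    · simpa using h2.symm
    · exfalso
      apply hw'
      rw [h2]
      have hsub : List.replicate u true <:+ List.replicate (u * n) true := by
        refine ⟨List.replicate (u*n - u) true, ?_⟩
        rw [List.replicate_append_replicate]
        congr 1
        have : u ≤ u * n := Nat.le_mul_of_pos_right u hn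
        omega
      exact hsub.trans (List.suffix_append _ _)
  · exfalso
    obtain ⟨n, rfl⟩ : ∃ n : ℕ, j = -(n+1 : ℕ) := ⟨(-(j+1)).toNat, by omega⟩
    have : pos w = pos w' * ((FreeGroup.of true : F₂) ^ u) ^ ((n+1 : ℕ) : ℤ) := by
      rw [h, mul_assoc, ← zpow_add]
      rw [show -(((n:ℕ)+1:ℕ):ℤ) + (((n:ℕ)+1 : ℕ):ℤ) = 0 by push_cast; ring, zpow_zero, mul_one]
    have h2 := key w' w (n+1) hw this
    apply hw
    rw [h2]
    have : List.replicate u true <:+ List.replicate (u * (n+1)) true := by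
      refine ⟨List.replicate (u*(n+1) - u) true, ?_⟩
      rw [List.replicate_append_replicate]
      congr 1
      have : u ≤ u * (n+1) := Nat.le_mul_of_pos_right u (by omega)
      omega
    exact this.trans (List.suffix_append _ _)

end S15

namespace S15
open HNNExtension List

variable {s u : ℕ} {A B' : Subgroup F₂} (φ : A ≃* B')

/-- one positive syllable: `of (pos w) * t` -/
def oft (w : List Bool) : HNNExtension F₂ A B' φ := of (pos w) * t

/-- `th ws g = of (pos ws₀) * t * ... * of (pos wsₖ) * t * of g` -/
def th (ws : List (List Bool)) (g : F₂) : HNNExtension F₂ A B' φ :=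
  (ws.map (oft φ)).prod * of g

theorem th_nil (g : F₂) : th φ [] g = of g := by simp [th]

theorem th_cons (w : List Bool) (ws : List (List Bool)) (g : F₂) :
    th φ (w :: ws) g = of (pos w) * (t * th φ ws g) := by
  simp [th, oft, mul_assoc]

theorem th_mul_of (ws : List (List Bool)) (g h : F₂) :
    th φ ws g * of h = th φ ws (g * h) := by
  simp [th, mul_assoc, map_mul]

theorem th_append (ws₁ ws₂ : List (List Bool)) (g : F₂) :
    th φ (ws₁ ++ ws₂) g = (ws₁.map (oft φ)).prod * th φ ws₂ g := by
  simp [th, mul_assoc]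

theorem th_mul_cons (ws ws' : List (List Bool)) (G w : List Bool) (g : F₂) :
    th φ ws (pos G) * th φ (w :: ws') g = th φ (ws ++ (G ++ w) :: ws') g := by
  simp [th, th_cons, oft, pos_append, mul_assoc, map_mul]

/-- the positive cone -/
def Pst : Submonoid (HNNExtension F₂ A B' φ) :=
  Submonoid.closure ((of '' (F₂pos : Set F₂)) ∪ {t})

theorem th_mem_Pst (ws : List (List Bool)) (G : List Bool) : th φ ws (pos G) ∈ Pst φ := by
  induction ws with
  | nil =>
    rw [th_nil]
    exact Submonoid.subset_closure (Or.inl ⟨pos G, pos_mem_F₂pos G, rfl⟩)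
  | cons w ws ih =>
    rw [th_cons]
    exact mul_mem (Submonoid.subset_closure (Or.inl ⟨pos w, pos_mem_F₂pos w, rfl⟩))
      (mul_mem (Submonoid.subset_closure (Or.inr rfl)) ih)

theorem mem_Pst_iff {z : HNNExtension F₂ A B' φ} :
    z ∈ Pst φ ↔ ∃ ws G, th φ ws (pos G) = z := by
  constructor
  · intro hz
    induction hz using Submonoid.closure_induction with
    | mem y hy =>
      rcases hy with ⟨x, hx, rfl⟩ | hy
      · obtain ⟨l, rfl⟩ := mem_F₂pos_iff.1 hx
        exact ⟨[], l, th_nil φ _⟩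
      · simp only [Set.mem_singleton_iff] at hy
        subst hy
        exact ⟨[[]], [], by simp [th, oft, pos_nil]⟩
    | one => exact ⟨[], [], by simp [th_nil, pos_nil]⟩
    | mul y z _ _ hy hz =>
      obtain ⟨ws, G, rfl⟩ := hy; obtain ⟨ws', G', rfl⟩ := hz
      cases ws' with
      | nil =>
        rw [th_nil, th_mul_of, ← pos_append]
        exact ⟨ws, G ++ G', rfl⟩
      | cons w rest =>
        rw [th_mul_cons]
        exact ⟨ws ++ (G ++ w) :: rest, G', rfl⟩
  · rintro ⟨ws, G, rfl⟩; exact th_mem_Pst φ ws G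

section rel
variable (hA : A = Subgroup.zpowers (FreeGroup.of true ^ s))
  (hB : B' = Subgroup.zpowers (FreeGroup.of true ^ u))
  (hφ : ∀ (x : A) (m : ℤ), (x : F₂) = (FreeGroup.of true ^ s) ^ m →
      ((φ x : B') : F₂) = (FreeGroup.of true ^ u) ^ m)

include hA hB hφ

theorem rel_pow (k : ℤ) :
    (t : HNNExtension F₂ A B' φ) * of (((FreeGroup.of true : F₂) ^ s) ^ k) =
      of (((FreeGroup.of true : F₂) ^ u) ^ k) * t := by
  have hmem : ((FreeGroup.of true : F₂) ^ s) ^ k ∈ A := by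
    rw [hA]; exact zpow_mem (Subgroup.mem_zpowers _) k
  have := t_mul_of (φ := φ) ⟨_, hmem⟩
  rwa [hφ ⟨_, hmem⟩ k rfl] at this

theorem slide_pow (k : ℤ) :
    of (((FreeGroup.of true : F₂) ^ u) ^ k) * (t : HNNExtension F₂ A B' φ) =
      t * of (((FreeGroup.of true : F₂) ^ s) ^ k) := (rel_pow φ hA hB hφ k).symm

end rel

end S15

namespace S15
open HNNExtension List

variable {s u : ℕ} {A B' : Subgroup F₂} (φ : A ≃* B')

/-- head of the reduced word representing `th cws g * (th dws h)⁻¹` -/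
def frhead : List (List Bool) → F₂ → F₂ → F₂
  | [], g, h => g * h⁻¹
  | c :: _, _, _ => pos c

/-- the letters of the reduced word representing `th cws g * (th dws h)⁻¹` -/
def frlist : List (List Bool) → F₂ → F₂ → List (List Bool) → List (ℤˣ × F₂)
  | [], _, _, dws => dws.reverse.map fun w => ((-1:ℤˣ), (pos w)⁻¹)
  | _ :: rest, g, h, dws =>
      ((rest.map fun w => ((1:ℤˣ), pos w)) ++ [((1:ℤˣ), g * h⁻¹)]) ++
        dws.reverse.map fun w => ((-1:ℤˣ), (pos w)⁻¹)

theorem map_pair_fst {X : Type*} (l : List X) (F : X → F₂) (c : ℤˣ) :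
    ((l.map fun w => (c, F w)).map Prod.fst) = List.replicate l.length c := by
  induction l with
  | nil => rfl
  | cons x l ih => simp [ih, List.replicate_succ]

theorem frlist_map_fst (cws dws : List (List Bool)) (g h : F₂) :
    (frlist cws g h dws).map Prod.fst =
      List.replicate cws.length (1:ℤˣ) ++ List.replicate dws.length (-1:ℤˣ) := by
  cases cws with
  | nil =>
    show ((dws.reverse.map fun w => ((-1:ℤˣ), (pos w)⁻¹)).map Prod.fst) = _
    rw [map_pair_fst]
    simp
  | cons c rest =>
    simp only [frlist, List.map_append, map_pair_fst, List.length_cons]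
    rw [List.replicate_succ' (n := rest.length)]
    simp [map_pair_fst]

theorem rep_app_inj {r q r' q' : ℕ}
    (h : List.replicate r (1:ℤˣ) ++ List.replicate q (-1:ℤˣ)
       = List.replicate r' (1:ℤˣ) ++ List.replicate q' (-1:ℤˣ)) : r = r' ∧ q = q' := by
  have hc := congrArg (List.count (1:ℤˣ)) h
  have hl := congrArg List.length h
  simp only [List.length_append, List.length_replicate] at hl
  simp only [List.count_append, List.count_replicate] at hc
  norm_num at hc
  omega

theorem chain_const_fst (c : ℤˣ) (l : List (ℤˣ × F₂)) (h : ∀ p ∈ l, p.1 = c) :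
    l.Chain' (fun a b => a.2 ∈ (toSubgroup A B' a.1 : Subgroup F₂) → a.1 = b.1) := by
  induction l with
  | nil => exact List.isChain_nil
  | cons x l ih =>
    refine List.isChain_cons.2 ⟨?_, ih fun p hp => h p (List.mem_cons_of_mem _ hp)⟩
    intro y hy _
    rw [h x (List.mem_cons_self), h y (List.mem_cons_of_mem _ (List.mem_of_mem_head? hy))]

theorem frlist_chain (cws dws : List (List Bool)) (g h : F₂)
    (hγ : cws ≠ [] → dws ≠ [] → g * h⁻¹ ∉ A) :
    (frlist cws g h dws).Chain'
      (fun a b => a.2 ∈ (toSubgroup A B' a.1 : Subgroup F₂) → a.1 = b.1) := by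
  cases cws with
  | nil =>
    simp only [frlist]
    apply chain_const_fst (-1:ℤˣ)
    intro p hp
    obtain ⟨w, -, rfl⟩ := List.mem_map.1 hp; rfl
  | cons c rest =>
    simp only [frlist]
    rw [List.Chain', List.isChain_append]
    refine ⟨?_, ?_, ?_⟩
    · apply chain_const_fst (1:ℤˣ)
      intro p hp
      rcases List.mem_append.1 hp with hp | hp
      · obtain ⟨w, -, rfl⟩ := List.mem_map.1 hp; rfl
      · simp only [List.mem_singleton] at hp; rw [hp]
    · apply chain_const_fst (-1:ℤˣ)
      intro p hp
      obtain ⟨w, -, rfl⟩ := List.mem_map.1 hp; rfl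
    · intro x hx y hy
      have hx' : x = ((1:ℤˣ), g * h⁻¹) := by
        rw [List.getLast?_concat] at hx
        exact (Option.some_injective _ hx).symm
      have hd : dws ≠ [] := by
        intro hd; subst hd; simp at hy
      intro hmem
      exfalso
      rw [hx'] at hmem
      simp only [toSubgroup_one] at hmem
      exact hγ (List.cons_ne_nil _ _) hd hmem

/-- the reduced word representing a fraction -/
def frw (cws dws : List (List Bool)) (g h : F₂)
    (hγ : cws ≠ [] → dws ≠ [] → g * h⁻¹ ∉ A) : NormalWord.ReducedWord F₂ A B' :=
  ⟨frhead cws g h, frlist cws g h dws, frlist_chain cws dws g h hγ⟩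

theorem t_aux (rest : List (List Bool)) (g : F₂) :
    (t : HNNExtension F₂ A B' φ) * th φ rest g =
      (rest.map fun w => (t : HNNExtension F₂ A B' φ) * of (pos w)).prod * (t * of g) := by
  induction rest generalizing g with
  | nil => simp [th_nil]
  | cons w ws ih =>
    rw [th_cons]
    simp only [List.map_cons, List.prod_cons]
    rw [mul_assoc (t * of (pos w)), ← ih g]
    simp [mul_assoc]

theorem th_inv (dws : List (List Bool)) (h : F₂) :
    (th φ dws h)⁻¹ = of h⁻¹ *
      (dws.reverse.map fun w => (t : HNNExtension F₂ A B' φ)⁻¹ * of (pos w)⁻¹).prod := by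
  induction dws generalizing h with
  | nil => simp [th_nil]
  | cons d rest ih =>
    rw [th_cons, mul_inv_rev, mul_inv_rev, ih]
    simp only [List.reverse_cons, List.map_append, List.prod_append, List.map_cons,
      List.prod_cons, List.map_nil, List.prod_nil, map_inv, mul_one, mul_assoc]

theorem frw_prod (cws dws : List (List Bool)) (g h : F₂)
    (hγ : cws ≠ [] → dws ≠ [] → g * h⁻¹ ∉ A) :
    (frw cws dws g h hγ).prod φ = th φ cws g * (th φ dws h)⁻¹ := by
  have hneg : ((dws.reverse.map fun w => ((-1:ℤˣ), (pos w)⁻¹)).map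
      (fun x => (t : HNNExtension F₂ A B' φ) ^ (x.1 : ℤ) * of x.2)).prod =
      (dws.reverse.map fun w => (t : HNNExtension F₂ A B' φ)⁻¹ * of (pos w)⁻¹).prod := by
    rw [List.map_map]
    congr 1
  cases cws with
  | nil =>
    simp only [frw, frlist, frhead, NormalWord.ReducedWord.prod]
    rw [th_nil, th_inv, hneg, ← mul_assoc, ← map_mul]
  | cons c rest =>
    simp only [frw, frlist, frhead, NormalWord.ReducedWord.prod]
    rw [List.map_append, List.prod_append, hneg, th_inv, th_cons, t_aux]
    rw [List.map_append, List.prod_append]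
    simp only [List.map_map, List.map_cons, List.map_nil, List.prod_cons, List.prod_nil]
    have heq1 : ∀ w : List Bool,
        ((fun x : ℤˣ × F₂ => (t : HNNExtension F₂ A B' φ) ^ (x.1 : ℤ) * of x.2) ∘
          fun w => ((1:ℤˣ), pos w)) w = (t : HNNExtension F₂ A B' φ) * of (pos w) := by
      intro w; simp
    rw [List.map_congr_left (fun w _ => heq1 w)]
    simp only [Units.val_one, zpow_one, mul_one, map_mul]
    simp [mul_assoc]

theorem frlist_head?_fst (c : List Bool) (crest dws : List (List Bool)) (g h : F₂) :
    ((frlist (c :: crest) g h dws).head?.map Prod.fst) = some 1 := by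
  cases crest <;> simp [frlist]

theorem extract {u' : ℕ} (hB : B' = Subgroup.zpowers (FreeGroup.of true ^ u'))
    (cws dws cws' dws' : List (List Bool)) (g h g' h' : F₂)
    (hγ : cws ≠ [] → dws ≠ [] → g * h⁻¹ ∉ A)
    (hγ' : cws' ≠ [] → dws' ≠ [] → g' * h'⁻¹ ∉ A)
    (heq : th φ cws g * (th φ dws h)⁻¹ = th φ cws' g' * (th φ dws' h')⁻¹) :
    cws.length = cws'.length ∧ dws.length = dws'.length ∧
    ∀ c crest c' crest', cws = c :: crest → cws' = c' :: crest' →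
      ∃ j : ℤ, pos c' = pos c * ((FreeGroup.of true : F₂) ^ u') ^ j := by
  have hp : (frw cws dws g h hγ).prod φ = (frw cws' dws' g' h' hγ').prod φ := by
    rw [frw_prod, frw_prod]; exact heq
  obtain ⟨hfst, hcoset⟩ := ReducedWord.map_fst_eq_and_of_prod_eq φ hp
  have hfst' := hfst
  simp only [frw] at hfst'
  rw [frlist_map_fst, frlist_map_fst] at hfst'
  obtain ⟨h1, h2⟩ := rep_app_inj hfst'
  refine ⟨h1, h2, ?_⟩
  rintro c crest c' crest' rfl rfl
  have hco := hcoset 1 (by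
    simp only [frw]
    rw [frlist_head?_fst]
    simp)
  simp only [frw, frhead] at hco
  rw [show -(1:ℤˣ) = (-1:ℤˣ) from rfl, toSubgroup_neg_one, hB] at hco
  obtain ⟨j, hj⟩ := Subgroup.mem_zpowers_iff.1 hco
  exact ⟨j, by rw [hj, mul_inv_cancel_left]⟩

end S15

namespace S15
open HNNExtension List

variable {s u : ℕ} {A B' : Subgroup F₂} (φ : A ≃* B')

theorem cop_symm {X Y : List Bool} (h : Cop X Y) : Cop Y X := by
  rintro ⟨ℓ, h1, h2⟩; exact h ⟨ℓ, h2, h1⟩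

theorem lemchain (hu : 1 ≤ u) (hB : B' = Subgroup.zpowers (FreeGroup.of true ^ u)) :
    ∀ (ws ws' : List (List Bool)) (g g' : F₂),
      (∀ w ∈ ws, ¬ List.replicate u true <:+ w) →
      (∀ w ∈ ws', ¬ List.replicate u true <:+ w) →
      th φ ws g = th φ ws' g' → ws = ws' ∧ g = g' := by
  intro ws
  induction ws with
  | nil =>
    intro ws' g g' _ _ heq
    have hfr : th φ [] g * (th φ [] (1:F₂))⁻¹ = th φ ws' g' * (th φ [] (1:F₂))⁻¹ := by rw [heq]
    obtain ⟨h1, -, -⟩ := extract φ hB [] [] ws' [] g 1 g' 1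
      (fun h => absurd rfl h) (fun _ h => absurd rfl h) hfr
    have hws' : ws' = [] := List.length_eq_zero_iff.1 h1.symm
    subst hws'
    rw [th_nil, th_nil] at heq
    exact ⟨rfl, HNNExtension.of_injective (φ := φ) heq⟩
  | cons c crest ih =>
    intro ws' g g' hα hα' heq
    have hfr : th φ (c :: crest) g * (th φ [] (1:F₂))⁻¹
        = th φ ws' g' * (th φ [] (1:F₂))⁻¹ := by rw [heq]
    obtain ⟨h1, -, h3⟩ := extract φ hB (c :: crest) [] ws' [] g 1 g' 1
      (fun _ h => absurd rfl h) (fun _ h => absurd rfl h) hfr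
    cases ws' with
    | nil => simp at h1
    | cons c' crest' =>
      obtain ⟨j, hj⟩ := h3 c crest c' crest' rfl rfl
      have hc : c = c' := nosuf hu (hα c (List.mem_cons_self))
        (hα' c' (List.mem_cons_self)) hj
      subst hc
      rw [th_cons, th_cons] at heq
      have heq3 := mul_left_cancel (mul_left_cancel heq)
      obtain ⟨e1, e2⟩ := ih crest' g g'
        (fun w hw => hα w (List.mem_cons_of_mem _ hw))
        (fun w hw => hα' w (List.mem_cons_of_mem _ hw)) heq3
      exact ⟨by rw [e1], e2⟩

theorem uniq (hu : 1 ≤ u) (hB : B' = Subgroup.zpowers (FreeGroup.of true ^ u)) :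
    ∀ (cws cws' dws dws' : List (List Bool)) (CG DG CG' DG' : List Bool),
      (∀ w ∈ cws, ¬ List.replicate u true <:+ w) →
      (∀ w ∈ dws, ¬ List.replicate u true <:+ w) →
      (∀ w ∈ cws', ¬ List.replicate u true <:+ w) →
      (∀ w ∈ dws', ¬ List.replicate u true <:+ w) →
      Cop CG DG → Cop CG' DG' →
      (cws ≠ [] → dws ≠ [] → pos CG * (pos DG)⁻¹ ∉ A) →
      (cws' ≠ [] → dws' ≠ [] → pos CG' * (pos DG')⁻¹ ∉ A) →
      th φ cws (pos CG) * (th φ dws (pos DG))⁻¹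
        = th φ cws' (pos CG') * (th φ dws' (pos DG'))⁻¹ →
      cws = cws' ∧ dws = dws' ∧ CG = CG' ∧ DG = DG' := by
  intro cws
  induction cws with
  | nil =>
    intro cws' dws dws' CG DG CG' DG' hα1 hα2 hα3 hα4 hβ hβ' hγ hγ' heq
    obtain ⟨h1, -, -⟩ := extract φ hB [] dws cws' dws' _ _ _ _ hγ hγ' heq
    have hc' : cws' = [] := List.length_eq_zero_iff.1 h1.symm
    subst hc'
    rw [th_nil, th_nil] at heq
    have heq2 : th φ dws (pos DG * (pos CG)⁻¹) = th φ dws' (pos DG' * (pos CG')⁻¹) := by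
      rw [← th_mul_of, ← th_mul_of, map_inv, map_inv]
      have hinv := congrArg (fun z => z⁻¹) heq
      simp only [mul_inv_rev, inv_inv] at hinv
      exact hinv
    obtain ⟨hd, hg⟩ := lemchain φ hu hB dws dws' _ _ hα2 hα4 heq2
    obtain ⟨hDG, hCG⟩ := frac_unique (cop_symm hβ) (cop_symm hβ') hg
    exact ⟨rfl, hd, hCG, hDG⟩
  | cons c crest ih =>
    intro cws' dws dws' CG DG CG' DG' hα1 hα2 hα3 hα4 hβ hβ' hγ hγ' heq
    obtain ⟨h1, -, h3⟩ := extract φ hB (c :: crest) dws cws' dws' _ _ _ _ hγ hγ' heq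
    cases cws' with
    | nil => simp at h1
    | cons c' crest' =>
      obtain ⟨j, hj⟩ := h3 c crest c' crest' rfl rfl
      have hc : c = c' := nosuf hu (hα1 c (List.mem_cons_self))
        (hα3 c' (List.mem_cons_self)) hj
      subst hc
      rw [th_cons, th_cons] at heq
      simp only [mul_assoc] at heq
      have heq3 := mul_left_cancel (mul_left_cancel heq)
      obtain ⟨e1, e2, e3, e4⟩ := ih crest' dws dws' CG DG CG' DG'
        (fun w hw => hα1 w (List.mem_cons_of_mem _ hw)) hα2
        (fun w hw => hα3 w (List.mem_cons_of_mem _ hw)) hα4 hβ hβ'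
        (fun _ hd => hγ (List.cons_ne_nil _ _) hd)
        (fun _ hd => hγ' (List.cons_ne_nil _ _) hd) heq3
      exact ⟨by rw [e1], e2, e3, e4⟩

end S15

namespace S15
open HNNExtension List

variable {s u : ℕ} {A B' : Subgroup F₂} (φ : A ≃* B')

def NoSuf (u : ℕ) (w : List Bool) : Prop := ¬ List.replicate u true <:+ w

def w8 (s : ℕ) (ws : List (List Bool)) : ℕ :=
  ws.foldl (fun acc w => (s+2) * acc + (s+2) * w.length) 0

theorem w8_shift (s : ℕ) (R : List (List Bool)) : ∀ init : ℕ,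
    R.foldl (fun acc w => (s+2) * acc + (s+2) * w.length) init
      = (s+2)^R.length * init + w8 s R := by
  induction R with
  | nil => intro init; simp [w8]
  | cons w R ih =>
    intro init
    have h2 : w8 s (w :: R) = (s+2)^R.length * ((s+2) * w.length) + w8 s R := by
      rw [w8, List.foldl_cons, ih]
      norm_num
    rw [List.foldl_cons, ih, h2, List.length_cons, pow_succ]
    ring

theorem w8_cons (s : ℕ) (w : List Bool) (rest : List (List Bool)) :
    w8 s (w :: rest) = (s+2)^(rest.length + 1) * w.length + w8 s rest := by
  rw [w8, List.foldl_cons, w8_shift, pow_succ]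
  ring

theorem stripSuf_ex (hu : 1 ≤ u) : ∀ (n : ℕ) (w : List Bool), w.length ≤ n →
    ∃ (w' : List Bool) (k : ℕ), w = w' ++ List.replicate (u*k) true ∧ NoSuf u w' := by
  intro n
  induction n with
  | zero =>
    intro w hw
    have : w = [] := List.eq_nil_of_length_eq_zero (by omega)
    subst this
    refine ⟨[], 0, by simp, ?_⟩
    intro hsuf
    have := hsuf.length_le
    simp at this
    omega
  | succ n ih =>
    intro w hw
    by_cases h : List.replicate u true <:+ w
    · obtain ⟨x, hx⟩ := h
      have hlen : x.length ≤ n := by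
        have := congrArg List.length hx
        simp at this
        omega
      obtain ⟨w', k, e1, e2⟩ := ih x hlen
      refine ⟨w', k+1, ?_, e2⟩
      rw [← hx, e1, List.append_assoc, List.replicate_append_replicate, Nat.mul_succ]
    · exact ⟨w, 0, by simp, h⟩

section moves
variable (hA : A = Subgroup.zpowers (FreeGroup.of true ^ s))
  (hB : B' = Subgroup.zpowers (FreeGroup.of true ^ u))
  (hφ : ∀ (x : A) (m : ℤ), (x : F₂) = (FreeGroup.of true ^ s) ^ m →
      ((φ x : B') : F₂) = (FreeGroup.of true ^ u) ^ m)

include hA hB hφ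

theorem of_apow_t (k : ℕ) :
    of ((FreeGroup.of true : F₂) ^ (u*k)) * (t : HNNExtension F₂ A B' φ)
      = t * of ((FreeGroup.of true : F₂) ^ (s*k)) := by
  have h := slide_pow φ hA hB hφ (k : ℤ)
  rw [zpow_natCast, zpow_natCast, ← pow_mul, ← pow_mul] at h
  exact h

theorem key_step (w'' : List Bool) (k : ℕ) (X : HNNExtension F₂ A B' φ) :
    of (pos (w'' ++ List.replicate (u*k) true)) * (t * X)
      = of (pos w'') * (t * (of ((FreeGroup.of true : F₂) ^ (s*k)) * X)) := by
  rw [pos_append, map_mul, mul_assoc]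
  congr 1
  rw [← apow, ← mul_assoc, ← mul_assoc, of_apow_t φ hA hB hφ k]

theorem slide_ex (hu : 1 ≤ u) : ∀ (ws : List (List Bool)) (c : ℕ) (CG : List Bool),
    ∃ (ws' : List (List Bool)) (CG' : List Bool),
      (∀ w ∈ ws', NoSuf u w) ∧ ws'.length = ws.length ∧
      of ((FreeGroup.of true : F₂) ^ (s*c)) * th φ ws (pos CG) = th φ ws' (pos CG') ∧
      w8 s ws' + CG'.length ≤ w8 s ws + CG.length + s * c * (s+2)^ws.length := by
  intro ws
  induction ws with
  | nil =>
    intro c CG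
    refine ⟨[], List.replicate (s*c) true ++ CG, by simp, rfl, ?_, ?_⟩
    · rw [th_nil, th_nil, ← map_mul, pos_append, ← apow]
    · simp [w8]
      omega
  | cons w rest ih =>
    intro c CG
    obtain ⟨w'', k, e1, e2⟩ := stripSuf_ex hu (List.replicate (s*c) true ++ w).length
      (List.replicate (s*c) true ++ w) le_rfl
    obtain ⟨ws₁, CG₁, hN, hL, hV, hW⟩ := ih k CG
    refine ⟨w'' :: ws₁, CG₁, ?_, by simp [hL], ?_, ?_⟩
    · intro x hx
      rcases List.mem_cons.1 hx with rfl | hx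
      · exact e2
      · exact hN x hx
    · rw [th_cons, ← mul_assoc, ← map_mul, apow (s*c), ← pos_append, e1,
        key_step φ hA hB hφ, hV, ← th_cons]
    · have hlen : w''.length + u*k = s*c + w.length := by
        have h9 := congrArg List.length e1
        simp at h9
        omega
      rw [w8_cons, w8_cons, hL, List.length_cons]
      have e4 : s * k * (s+2)^rest.length ≤ u * k * (s+2)^(rest.length+1) := by
        rw [pow_succ]
        have h5 : s * k ≤ u * k * (s+2) := by
          have h6 : s * k ≤ (s+2) * k := Nat.mul_le_mul_right k (by omega)
          have h7 : (s+2) * k ≤ u * ((s+2) * k) := by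
            calc (s+2) * k = 1 * ((s+2) * k) := (one_mul _).symm
            _ ≤ u * ((s+2) * k) := Nat.mul_le_mul_right _ hu
          calc s * k ≤ u * ((s+2) * k) := h6.trans h7
          _ = u * k * (s+2) := by ring
        calc s * k * (s+2)^rest.length ≤ (u * k * (s+2)) * (s+2)^rest.length :=
              Nat.mul_le_mul_right _ h5
        _ = u * k * ((s+2)^rest.length * (s+2)) := by ring
      have e5 : (s+2)^(rest.length+1) * (w''.length + u*k)
          = (s+2)^(rest.length+1) * (s*c + w.length) := by rw [hlen]
      rw [Nat.mul_add, Nat.mul_add] at e5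
      have key2 := hW
      ring_nf at e4 e5 key2 ⊢
      linarith

end moves
end S15

namespace S15
open HNNExtension List

variable {s u : ℕ} {A B' : Subgroup F₂} (φ : A ≃* B')

theorem cancel_common {G : Type*} [Group G] (X Y Z : G) : (X*Z)*(Y*Z)⁻¹ = X * Y⁻¹ := by
  group

theorem th_strip (ws : List (List Bool)) (C : List Bool) (ℓ : Bool) :
    th φ ws (pos (C ++ [ℓ])) = th φ ws (pos C) * of (FreeGroup.of ℓ) := by
  rw [pos_append, pos_singleton, ← th_mul_of]

theorem pc0 (L : List (List Bool)) (dl : List Bool) (DG : List Bool) :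
    th φ (L ++ [dl]) (pos DG) = th φ L (pos dl) * ((t : HNNExtension F₂ A B' φ) * of (pos DG)) := by
  rw [th_append, th_cons, th_nil, th]
  simp [mul_assoc]

theorem t_of_mem_Pst (DG : List Bool) :
    (t : HNNExtension F₂ A B' φ) * of (pos DG) ∈ Pst φ := by
  have := th_mem_Pst φ [[]] DG
  simpa [th, oft, pos_nil] using this

theorem of_pos_mem_Pst (G : List Bool) : (of (pos G) : HNNExtension F₂ A B' φ) ∈ Pst φ := by
  have := th_mem_Pst φ [] G
  simpa [th_nil] using this

section moves2
variable (hA : A = Subgroup.zpowers (FreeGroup.of true ^ s))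
  (hB : B' = Subgroup.zpowers (FreeGroup.of true ^ u))
  (hφ : ∀ (x : A) (m : ℤ), (x : F₂) = (FreeGroup.of true ^ s) ^ m →
      ((φ x : B') : F₂) = (FreeGroup.of true ^ u) ^ m)

include hA hB hφ

theorem pc1 (L : List (List Bool)) (cl : List Bool) (DG : List Bool) (k : ℕ) :
    th φ (L ++ [cl]) (pos (List.replicate (s*k) true ++ DG))
      = th φ L (pos (cl ++ List.replicate (u*k) true))
          * ((t : HNNExtension F₂ A B' φ) * of (pos DG)) := by
  rw [pc0]
  have h1 : pos (List.replicate (s*k) true ++ DG) = (FreeGroup.of true : F₂)^(s*k) * pos DG := by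
    rw [pos_append, apow]
  have h2 : pos (cl ++ List.replicate (u*k) true) = pos cl * (FreeGroup.of true : F₂)^(u*k) := by
    rw [pos_append, apow]
  rw [h1, map_mul, h2, ← th_mul_of, ← mul_assoc t, ← of_apow_t φ hA hB hφ k]
  simp [mul_assoc]

theorem exist_canon (hs : 1 ≤ s) (hu : 1 ≤ u) :
    ∀ (N M : ℕ) (cws dws : List (List Bool)) (CG DG : List Bool),
      cws.length + dws.length < N →
      w8 s cws + CG.length + w8 s dws + DG.length < M →
      ∃ c' d' C' D',
        (∀ w ∈ c', NoSuf u w) ∧ (∀ w ∈ d', NoSuf u w) ∧ Cop C' D' ∧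
        (c' ≠ [] → d' ≠ [] → pos C' * (pos D')⁻¹ ∉ A) ∧
        th φ c' (pos C') * (th φ d' (pos D'))⁻¹
          = th φ cws (pos CG) * (th φ dws (pos DG))⁻¹ ∧
        ∃ z ∈ Pst φ, th φ cws (pos CG) = th φ c' (pos C') * z := by
  intro N
  induction N with
  | zero => intro M cws dws CG DG hN; omega
  | succ N ihN =>
    intro M
    induction M with
    | zero => intro cws dws CG DG hN hM; omega
    | succ M ihM =>
      intro cws dws CG DG hN hM
      obtain ⟨cws₁, CG₁, hNc, hLc, hVc, hWc⟩ := slide_ex φ hA hB hφ hu cws 0 CG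
      obtain ⟨dws₁, DG₁, hNd, hLd, hVd, hWd⟩ := slide_ex φ hA hB hφ hu dws 0 DG
      have hVc' : th φ cws (pos CG) = th φ cws₁ (pos CG₁) := by
        rw [← hVc, Nat.mul_zero, pow_zero, map_one, one_mul]
      have hVd' : th φ dws (pos DG) = th φ dws₁ (pos DG₁) := by
        rw [← hVd, Nat.mul_zero, pow_zero, map_one, one_mul]
      simp only [Nat.mul_zero, Nat.zero_mul, Nat.add_zero] at hWc hWd
      by_cases hpinch : cws₁ ≠ [] ∧ dws₁ ≠ [] ∧ pos CG₁ * (pos DG₁)⁻¹ ∈ A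
      · obtain ⟨hc1, hd1, hmem⟩ := hpinch
        rw [hA] at hmem
        obtain ⟨k, hk⟩ := Subgroup.mem_zpowers_iff.1 hmem
        have hspC : cws₁.dropLast ++ [cws₁.getLast hc1] = cws₁ :=
          List.dropLast_append_getLast hc1
        have hspD : dws₁.dropLast ++ [dws₁.getLast hd1] = dws₁ :=
          List.dropLast_append_getLast hd1
        set L := cws₁.dropLast with hLdef
        set cl := cws₁.getLast hc1 with hcldef
        set Ld := dws₁.dropLast with hLddef
        set dl := dws₁.getLast hd1 with hdldef
        have hlenC : cws₁.length = L.length + 1 := by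
          rw [← hspC]; simp
        have hlenD : dws₁.length = Ld.length + 1 := by
          rw [← hspD]; simp
        cases k with
        | ofNat n =>
          have hCG : CG₁ = List.replicate (s*n) true ++ DG₁ := by
            apply pos_injective
            rw [pos_append, ← apow, pow_mul]
            rw [show ((FreeGroup.of true : F₂) ^ s) ^ n = ((FreeGroup.of true : F₂) ^ s) ^ (Int.ofNat n) from (zpow_natCast _ n).symm, hk, inv_mul_cancel_right]
          have hval1 : th φ cws₁ (pos CG₁)
              = th φ L (pos (cl ++ List.replicate (u*n) true))
                  * ((t : HNNExtension F₂ A B' φ) * of (pos DG₁)) := by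
            rw [← hspC, hCG]
            exact pc1 φ hA hB hφ L cl DG₁ n
          have hval2 : th φ dws₁ (pos DG₁)
              = th φ Ld (pos dl) * ((t : HNNExtension F₂ A B' φ) * of (pos DG₁)) := by
            rw [← hspD]; exact pc0 φ Ld dl DG₁
          obtain ⟨c', d', C', D', p1, p2, p3, p4, p5, z, hz, hzeq⟩ :=
            ihN (w8 s L + (cl ++ List.replicate (u*n) true).length + w8 s Ld + dl.length + 1)
              L Ld (cl ++ List.replicate (u*n) true) dl
              (by
                have h1 : cws.length = L.length + 1 := by rw [← hLc, hlenC]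
                have h2 : dws.length = Ld.length + 1 := by rw [← hLd, hlenD]
                omega)
              (Nat.lt_succ_self _)
          refine ⟨c', d', C', D', p1, p2, p3, p4, ?_, z * ((t : HNNExtension F₂ A B' φ) * of (pos DG₁)), mul_mem hz (t_of_mem_Pst φ DG₁), ?_⟩
          · rw [p5, hVc', hVd', hval1, hval2, cancel_common]
          · rw [hVc', hval1, hzeq, mul_assoc]
        | negSucc n =>
          have hDG : DG₁ = List.replicate (s*(n+1)) true ++ CG₁ := by
            apply pos_injective
            rw [pos_append, ← apow, pow_mul]
            have h9 : ((FreeGroup.of true : F₂) ^ s) ^ (Int.negSucc n) * pos DG₁ = pos CG₁ := by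
              rw [hk, inv_mul_cancel_right]
            have h10 : pos DG₁ = ((FreeGroup.of true : F₂) ^ s) ^ (((n+1:ℕ)) : ℤ) * pos CG₁ := by
              rw [← h9, ← mul_assoc, ← zpow_add,
                show (((n+1:ℕ)) : ℤ) + Int.negSucc n = 0 by
                  rw [Int.negSucc_eq]; push_cast; ring,
                zpow_zero, one_mul]
            rw [h10, zpow_natCast]
          have hval1 : th φ dws₁ (pos DG₁)
              = th φ Ld (pos (dl ++ List.replicate (u*(n+1)) true))
                  * ((t : HNNExtension F₂ A B' φ) * of (pos CG₁)) := by
            rw [← hspD, hDG]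
            exact pc1 φ hA hB hφ Ld dl CG₁ (n+1)
          have hval2 : th φ cws₁ (pos CG₁)
              = th φ L (pos cl) * ((t : HNNExtension F₂ A B' φ) * of (pos CG₁)) := by
            rw [← hspC]; exact pc0 φ L cl CG₁
          obtain ⟨c', d', C', D', p1, p2, p3, p4, p5, z, hz, hzeq⟩ :=
            ihN (w8 s L + cl.length + w8 s Ld + (dl ++ List.replicate (u*(n+1)) true).length + 1)
              L Ld cl (dl ++ List.replicate (u*(n+1)) true)
              (by
                have h1 : cws.length = L.length + 1 := by rw [← hLc, hlenC]
                have h2 : dws.length = Ld.length + 1 := by rw [← hLd, hlenD]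
                omega)
              (Nat.lt_succ_self _)
          refine ⟨c', d', C', D', p1, p2, p3, p4, ?_, z * ((t : HNNExtension F₂ A B' φ) * of (pos CG₁)), mul_mem hz (t_of_mem_Pst φ CG₁), ?_⟩
          · rw [p5, hVc', hVd', hval1, hval2, cancel_common]
          · rw [hVc', hval2, hzeq, mul_assoc]
      · by_cases hcop : Cop CG₁ DG₁
        · refine ⟨cws₁, dws₁, CG₁, DG₁, hNc, hNd, hcop, ?_, by rw [hVc', hVd'], 1, one_mem _, by rw [hVc', mul_one]⟩
          intro h1 h2 hmem
          exact hpinch ⟨h1, h2, hmem⟩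
        · obtain ⟨ℓ, hCl, hDl⟩ := not_not.1 hcop
          obtain ⟨C₀, rfl⟩ := List.getLast?_eq_some_iff.1 hCl
          obtain ⟨D₀, rfl⟩ := List.getLast?_eq_some_iff.1 hDl
          obtain ⟨c', d', C', D', p1, p2, p3, p4, p5, z, hz, hzeq⟩ :=
            ihM cws₁ dws₁ C₀ D₀
              (by
                rw [← hLc, ← hLd] at hN
                exact hN)
              (by
                simp only [List.length_append, List.length_singleton] at hWc hWd
                omega)
          refine ⟨c', d', C', D', p1, p2, p3, p4, ?_,
            z * of (FreeGroup.of ℓ),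
            mul_mem hz (by
              have := of_pos_mem_Pst (A := A) (B' := B') (φ := φ) [ℓ]
              rwa [pos_singleton] at this), ?_⟩
          · rw [p5, hVc', hVd', th_strip, th_strip, cancel_common]
          · rw [hVc', th_strip, hzeq, mul_assoc]

end moves2
end S15

namespace S15
open HNNExtension List

variable {s u : ℕ} {A B' : Subgroup F₂} (φ : A ≃* B')

section final
variable (hA : A = Subgroup.zpowers (FreeGroup.of true ^ s))
  (hB : B' = Subgroup.zpowers (FreeGroup.of true ^ u))
  (hφ : ∀ (x : A) (m : ℤ), (x : F₂) = (FreeGroup.of true ^ s) ^ m →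
      ((φ x : B') : F₂) = (FreeGroup.of true ^ u) ^ m)
  (hs : 1 ≤ s) (hu : 1 ≤ u)

include hA hB hφ hs hu

theorem sigma_min (g : HNNExtension F₂ A B' φ)
    (hex : ∃ z, z ∈ Pst φ ∧ g⁻¹ * z ∈ Pst φ) :
    ∃ w, (w ∈ Pst φ ∧ g⁻¹ * w ∈ Pst φ) ∧
      ∀ z, z ∈ Pst φ → g⁻¹ * z ∈ Pst φ → w⁻¹ * z ∈ Pst φ := by
  obtain ⟨z₀, hz₀, hz₀'⟩ := hex
  obtain ⟨ws, ZG, hth⟩ := (mem_Pst_iff φ).1 hz₀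
  obtain ⟨ws', ZG', hth'⟩ := (mem_Pst_iff φ).1 hz₀'
  have hg : g = th φ ws (pos ZG) * (th φ ws' (pos ZG'))⁻¹ := by
    rw [hth, hth']; group
  obtain ⟨cs, ds, Cs, Ds, q1, q2, q3, q4, q5, zc, hzc, hzceq⟩ :=
    exist_canon φ hA hB hφ hs hu (ws.length + ws'.length + 1)
      (w8 s ws + ZG.length + w8 s ws' + ZG'.length + 1) ws ws' ZG ZG'
      (Nat.lt_succ_self _) (Nat.lt_succ_self _)
  have hgq : g = th φ cs (pos Cs) * (th φ ds (pos Ds))⁻¹ := by rw [q5, ← hg]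
  refine ⟨th φ cs (pos Cs), ⟨th_mem_Pst φ cs Cs, ?_⟩, ?_⟩
  · have hdd : g⁻¹ * th φ cs (pos Cs) = th φ ds (pos Ds) := by rw [hgq]; group
    rw [hdd]; exact th_mem_Pst φ ds Ds
  · intro z hz hz'
    obtain ⟨ws₂, Z2, h2⟩ := (mem_Pst_iff φ).1 hz
    obtain ⟨ws₂', Z2', h2'⟩ := (mem_Pst_iff φ).1 hz'
    have hg2 : g = th φ ws₂ (pos Z2) * (th φ ws₂' (pos Z2'))⁻¹ := by
      rw [h2, h2']; group
    obtain ⟨c2, d2, C2, D2, r1, r2, r3, r4, r5, zc2, hzc2, hzc2eq⟩ :=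
      exist_canon φ hA hB hφ hs hu (ws₂.length + ws₂'.length + 1)
        (w8 s ws₂ + Z2.length + w8 s ws₂' + Z2'.length + 1) ws₂ ws₂' Z2 Z2'
        (Nat.lt_succ_self _) (Nat.lt_succ_self _)
    have heqv : th φ c2 (pos C2) * (th φ d2 (pos D2))⁻¹
        = th φ cs (pos Cs) * (th φ ds (pos Ds))⁻¹ := by
      rw [r5, ← hg2, hgq]
    obtain ⟨e1, e2, e3, e4⟩ := uniq φ hu hB c2 cs d2 ds C2 D2 Cs Ds r1 r2 q1 q2 r3 q3 r4 q4 heqv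
    have hzeq : z = th φ cs (pos Cs) * zc2 := by
      rw [← h2, hzc2eq, e1, e3]
    rw [hzeq]
    rw [inv_mul_cancel_left]
    exact hzc2

theorem pst_one (x : HNNExtension F₂ A B' φ) (hx : x ∈ Pst φ) (hx' : x⁻¹ ∈ Pst φ) :
    x = 1 := by
  obtain ⟨ws, G, hth⟩ := (mem_Pst_iff φ).1 hx
  obtain ⟨ws', G', hth'⟩ := (mem_Pst_iff φ).1 hx'
  have hone : th φ ws (pos G) * th φ ws' (pos G') = 1 := by
    rw [hth, hth', mul_inv_cancel]
  cases ws' with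
  | nil =>
    rw [th_nil, th_mul_of, ← pos_append] at hone
    have heq : th φ ws (pos (G ++ G')) * (th φ [] (1:F₂))⁻¹
        = th φ [] (1:F₂) * (th φ [] (1:F₂))⁻¹ := by
      rw [hone, th_nil, map_one]
    obtain ⟨hl, -, -⟩ := extract φ hB ws [] [] [] (pos (G++G')) 1 1 1
      (fun _ h => absurd rfl h) (fun h => absurd rfl h) heq
    have hws : ws = [] := List.length_eq_zero_iff.1 hl
    subst hws
    rw [th_nil] at hone
    have : pos (G ++ G') = 1 := by
      refine HNNExtension.of_injective (φ := φ) ?_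
      rw [map_one]
      exact hone
    have hGnil : G = [] := (List.append_eq_nil_iff.1 (pos_eq_one_iff.1 this)).1
    rw [← hth, hGnil, pos_nil, th_nil, map_one]
  | cons w rest =>
    exfalso
    rw [th_mul_cons] at hone
    have heq : th φ (ws ++ (G ++ w) :: rest) (pos G') * (th φ [] (1:F₂))⁻¹
        = th φ [] (1:F₂) * (th φ [] (1:F₂))⁻¹ := by
      rw [hone, th_nil, map_one]
    obtain ⟨hl, -, -⟩ := extract φ hB (ws ++ (G ++ w) :: rest) [] [] [] (pos G') 1 1 1
      (fun _ h => absurd rfl h) (fun h => absurd rfl h) heq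
    simp at hl

theorem main_qlo : QLO.IsQLO (Pst φ) := by
  constructor
  · intro x hx hx'
    exact pst_one φ hA hB hφ hs hu x hx hx'
  · rintro x y ⟨z, hzP, hxz, hyz⟩
    obtain ⟨w₁, ⟨hw₁P, hw₁'⟩, hmin₁⟩ := sigma_min φ hA hB hφ hs hu (x⁻¹ * y)
      ⟨x⁻¹ * z, hxz, by
        have h9 : (x⁻¹ * y)⁻¹ * (x⁻¹ * z) = y⁻¹ * z := by group
        rw [h9]; exact hyz⟩
    obtain ⟨w, ⟨hwP, hw'⟩, hmin⟩ := sigma_min φ hA hB hφ hs hu (x * w₁)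
      ⟨z, hzP, by
        have h9 : (x * w₁)⁻¹ * z = w₁⁻¹ * (x⁻¹ * z) := by group
        rw [h9]
        have h10 := hmin₁ (x⁻¹ * z) hxz (by
          have h11 : (x⁻¹ * y)⁻¹ * (x⁻¹ * z) = y⁻¹ * z := by group
          rw [h11]; exact hyz)
        exact h10⟩
    refine ⟨w, hwP, ?_, ?_, ?_⟩
    · show x⁻¹ * w ∈ Pst φ
      have h9 : x⁻¹ * w = w₁ * ((x * w₁)⁻¹ * w) := by group
      rw [h9]
      exact mul_mem hw₁P hw'
    · show y⁻¹ * w ∈ Pst φ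
      have h9 : y⁻¹ * w = ((x⁻¹ * y)⁻¹ * w₁) * ((x * w₁)⁻¹ * w) := by group
      rw [h9]
      exact mul_mem hw₁' hw'
    · intro z₂ hz₂ hxz₂ hyz₂
      show w⁻¹ * z₂ ∈ Pst φ
      have h10 := hmin₁ (x⁻¹ * z₂) hxz₂ (by
        have h11 : (x⁻¹ * y)⁻¹ * (x⁻¹ * z₂) = y⁻¹ * z₂ := by group
        rw [h11]; exact hyz₂)
      have h12 : (x * w₁)⁻¹ * z₂ = w₁⁻¹ * (x⁻¹ * z₂) := by group
      exact hmin z₂ hz₂ (by rw [h12]; exact h10)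

end final
end S15


theorem stmt15 (s u : ℕ) (hs : 1 ≤ s) (hu : 1 ≤ u)
    -- A = ⟨a^s⟩ and B' = ⟨a^u⟩
    (A B' : Subgroup F₂)
    (hA : A = Subgroup.zpowers (FreeGroup.of true ^ s))
    (hB : B' = Subgroup.zpowers (FreeGroup.of true ^ u))
    -- φ : A → B', φ(a^{ms}) = a^{mu}
    (φ : A ≃* B')
    (hφ : ∀ (x : A) (m : ℤ), (x : F₂) = (FreeGroup.of true ^ s) ^ m →
      ((φ x : B') : F₂) = (FreeGroup.of true ^ u) ^ m) :
    QLO.IsQLO (Submonoid.closure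
      ((HNNExtension.of '' (F₂pos : Set F₂)) ∪ {HNNExtension.t (φ := φ)})) := by
  exact S15.main_qlo φ hA hB hφ hs hu
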